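/- Let b ≥ 2 and n ≥ 2 be integers, set 𝔫 = 1 − 1/n ∈ ℚ and s = (2𝔫 − 𝔫²)/(2b − 2 + 𝔫) ∈ ℚ. Then s > 0, the rational number (s + 2)² − 8bs is the square of a rational number, and s < 6 − 4√2. -/

import Mathlib

/-- Proposition `prop:slope-diagonal`, arithmetic content: for integers
`b, n ≥ 2`, setting `𝔫 = 1 - 1/n` and `s = (2𝔫 - 𝔫²)/(2b - 2 + 𝔫)` in `ℚ`, one has `s > 0`,
the rational number `(s + 2)² - 8bs` is a square in `ℚ`, and `s < 6 - 4√2`. -/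
theorem stmt_16 (b n : ℕ) (hb : 2 ≤ b) (hn : 2 ≤ n)
    (f s : ℚ) (hf : f = 1 - 1 / (n : ℚ))
    (hs : s = (2 * f - f ^ 2) / (2 * (b : ℚ) - 2 + f)) :
    0 < s ∧
    (∃ q : ℚ, (s + 2) ^ 2 - 8 * (b : ℚ) * s = q ^ 2) ∧
    (s : ℝ) < 6 - 4 * Real.sqrt 2 := by
  have hnQ : (2 : ℚ) ≤ (n : ℚ) := by exact_mod_cast hn
  have hbQ : (2 : ℚ) ≤ (b : ℚ) := by exact_mod_cast hb
  have hn0 : (n : ℚ) ≠ 0 := by positivity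
  have hf0 : 0 < f := by
    rw [hf]
    have : 1 / (n : ℚ) ≤ 1 / 2 := by
      apply one_div_le_one_div_of_le <;> linarith
    linarith
  have hf1 : f < 1 := by
    rw [hf]
    have : 0 < 1 / (n : ℚ) := by positivity
    linarith
  have hD : 0 < 2 * (b : ℚ) - 2 + f := by linarith
  have hnum : 0 < 2 * f - f ^ 2 := by nlinarith
  have hspos : 0 < s := by rw [hs]; positivity
  refine ⟨hspos, ?_, ?_⟩
  · refine ⟨2 * (2 * (b : ℚ) * s - s - 1) * (n : ℚ) - s, ?_⟩
    have hDne : (2 * (b : ℚ) - 2 + f) ≠ 0 := ne_of_gt hD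
    have hsD : s * (2 * (b : ℚ) - 2 + f) = 2 * f - f ^ 2 := by
      rw [hs]; exact div_mul_cancel₀ (2 * f - f ^ 2) hDne
    have key : (2 * (b : ℚ) * s - s - 1) * (n : ℚ) ^ 2 - s * (n : ℚ) + 1 = 0 := by
      rw [hf] at hsD
      field_simp at hsD
      have key2 : ((2 * (b : ℚ) * s - s - 1) * (n : ℚ) ^ 2 - s * (n : ℚ) + 1) * (n : ℚ) ^ 2 = 0 := by
        linear_combination (n : ℚ) ^ 2 * hsD
      rcases mul_eq_zero.mp key2 with h | h
      · exact h
      · exact absurd h (pow_ne_zero 2 hn0)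
    linear_combination (-4 * (2 * (b : ℚ) * s - s - 1)) * key
  · -- real inequality
    set r : ℝ := Real.sqrt 2 with hr
    have hr2 : r ^ 2 = 2 := Real.sq_sqrt (by norm_num)
    have hr1 : 1 < r := by nlinarith [Real.sqrt_nonneg 2]
    have hrlt : r < 3 / 2 := by nlinarith [Real.sqrt_nonneg 2]
    have hF0 : (0 : ℝ) < (f : ℝ) := by exact_mod_cast hf0
    have hF1 : ((f : ℝ)) < 1 := by exact_mod_cast hf1
    set F : ℝ := (f : ℝ) with hF
    have hBR : (2 : ℝ) ≤ (b : ℝ) := by exact_mod_cast hb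
    have hsR : (s : ℝ) = (2 * F - F ^ 2) / (2 * (b : ℝ) - 2 + F) := by
      rw [hs]; push_cast; ring
    have hnumR : 0 < 2 * F - F ^ 2 := by nlinarith
    have h2F : (0 : ℝ) < 2 + F := by linarith
    have hle : (s : ℝ) ≤ (2 * F - F ^ 2) / (2 + F) := by
      rw [hsR]
      apply div_le_div_of_nonneg_left (le_of_lt hnumR) h2F
      linarith
    have hFne : F ≠ 2 * r - 2 := by
      intro h
      have : r = ((f + 2) / 2 : ℚ) := by push_cast; rw [← hF]; linarith
      exact irrational_sqrt_two ⟨(f + 2) / 2, this.symm⟩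
    have hsq : 0 < (F - (2 * r - 2)) ^ 2 :=
      (sq_nonneg _).lt_of_ne (Ne.symm (pow_ne_zero 2 (sub_ne_zero.mpr hFne)))
    have hkey : (2 * F - F ^ 2) / (2 + F) < 6 - 4 * r := by
      rw [div_lt_iff₀ h2F]
      nlinarith
    linarith
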